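/- For any side information S : {1,…,N} → [0,1] and any predictable sequence (β_t) with β_t ∈ [−1,1], the control variate U_t = S(I_t) − Σ_{i∈N_t} q_t(i) S(i) satisfies E[U_t | F_{t−1}] = 0 almost surely for every t; consequently the control-variate wealth process W̃_t(m*) = Π_{s=1}^t (1 + λ_s(m*)(Z_s + β_s U_s − μ_s(m*))), with predictable (λ_t(m*)) ensuring each factor is nonnegative, is a nonnegative martingale with initial value 1. -/

import Mathlib

open MeasureTheory Finset

namespace RLFA

variable {Ω : Type*}

/-- `remaining I t ω` is the set `N_t = {1,…,N} \ {I_1, …, I_{t-1}}` of indices not yet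
sampled before time `t`. -/
def remaining {N : ℕ} (I : ℕ → Ω → Fin N) (t : ℕ) (ω : Ω) : Finset (Fin N) :=
  Finset.univ \ (Finset.Icc 1 (t - 1)).image fun j => I j ω

/-- The filtration `F_t = σ(I_1, …, I_t)`. -/
def filt {N : ℕ} (I : ℕ → Ω → Fin N) (t : ℕ) : MeasurableSpace Ω :=
  ⨆ j ∈ Finset.Icc 1 t, MeasurableSpace.comap (I j) ⊤

/-- The importance-weighted observation `Z_t = f(I_t) · π(I_t) / q_t(I_t)`. -/
noncomputable def Zt {N : ℕ} (π f : Fin N → ℝ) (q : ℕ → Ω → Fin N → ℝ)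
    (I : ℕ → Ω → Fin N) (t : ℕ) (ω : Ω) : ℝ :=
  f (I t ω) * (π (I t ω) / q t ω (I t ω))

/-- `μ_t(m) = m − Σ_{j=1}^{t−1} π(I_j) f(I_j)`. -/
def muT {N : ℕ} (π f : Fin N → ℝ) (I : ℕ → Ω → Fin N) (m : ℝ) (t : ℕ) (ω : Ω) : ℝ :=
  m - ∑ j ∈ Finset.Icc 1 (t - 1), π (I j ω) * f (I j ω)

/-- The control variate `U_t = S(I_t) − Σ_{i ∈ N_t} q_t(i) S(i)`. -/
def Ut {N : ℕ} (S : Fin N → ℝ) (q : ℕ → Ω → Fin N → ℝ) (I : ℕ → Ω → Fin N)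
    (t : ℕ) (ω : Ω) : ℝ :=
  S (I t ω) - ∑ i ∈ remaining I t ω, q t ω i * S i

/-- The control-variate wealth process
`W̃_t(m) = Π_{s=1}^t (1 + λ_s(m)(Z_s + β_s U_s − μ_s(m)))`. -/
noncomputable def wealthCV {N : ℕ} (π f S : Fin N → ℝ) (q : ℕ → Ω → Fin N → ℝ)
    (I : ℕ → Ω → Fin N) (lam β : ℕ → Ω → ℝ) (m : ℝ) (t : ℕ) (ω : Ω) : ℝ :=
  ∏ s ∈ Finset.Icc 1 t,
    (1 + lam s ω * (Zt π f q I s ω + β s ω * Ut S q I s ω - muT π f I m s ω))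


section Helpers

lemma filt_mono {N : ℕ} (I : ℕ → Ω → Fin N) {s t : ℕ} (h : s ≤ t) :
    filt I s ≤ filt I t := by
  apply biSup_mono
  intro j hj
  exact Finset.mem_Icc.2 ⟨(Finset.mem_Icc.1 hj).1, le_trans (Finset.mem_Icc.1 hj).2 h⟩

lemma meas_I {N : ℕ} (I : ℕ → Ω → Fin N) {t j : ℕ} (hj : j ∈ Finset.Icc 1 t) :
    Measurable[filt I t] (I j) := by
  have hle : MeasurableSpace.comap (I j) ⊤ ≤ filt I t :=
    le_iSup₂ (f := fun j (_ : j ∈ Finset.Icc 1 t) => MeasurableSpace.comap (I j) ⊤) j hj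
  intro s _
  exact hle _ ⟨s, trivial, rfl⟩

lemma comp_meas {N : ℕ} {m : MeasurableSpace Ω} {h : Ω → Fin N} (hh : Measurable[m] h)
    {g : Ω → Fin N → ℝ} (hg : ∀ i, Measurable[m] fun ω => g ω i) :
    Measurable[m] (fun ω => g ω (h ω)) := by
  have he : (fun ω => g ω (h ω))
      = fun ω => ∑ i : Fin N, Set.indicator {ω | h ω = i} (fun ω => g ω i) ω := by
    funext ω
    rw [Finset.sum_eq_single (h ω)]
    · simp [Set.indicator_apply]
    · intro b _ hb
      simp only [Set.indicator_apply, Set.mem_setOf_eq]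
      exact if_neg fun e => hb e.symm
    · intro h'; exact absurd (Finset.mem_univ _) h'
  rw [he]
  exact Finset.measurable_sum _ fun i _ =>
    (hg i).indicator (hh (measurableSet_singleton i))

lemma rem_measSet {N : ℕ} (I : ℕ → Ω → Fin N) (t : ℕ) (i : Fin N) :
    MeasurableSet[filt I (t - 1)] {ω | i ∈ remaining I t ω} := by
  have he : {ω | i ∈ remaining I t ω}
      = ⋂ j ∈ Finset.Icc 1 (t - 1), {ω | I j ω ≠ i} := by
    ext ω
    simp [remaining, eq_comm]
  rw [he]
  refine MeasurableSet.biInter (Finset.Icc 1 (t - 1) : Finset ℕ).countable_toSet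
    fun j hj => ?_
  exact (meas_I I hj (measurableSet_singleton i)).compl

lemma sum_rem_meas {N : ℕ} (I : ℕ → Ω → Fin N) (t : ℕ)
    {g : Ω → Fin N → ℝ} (hg : ∀ i, Measurable[filt I (t - 1)] fun ω => g ω i) :
    Measurable[filt I (t - 1)] fun ω => ∑ i ∈ remaining I t ω, g ω i := by
  have he : (fun ω => ∑ i ∈ remaining I t ω, g ω i)
      = fun ω => ∑ i : Fin N, Set.indicator {ω | i ∈ remaining I t ω} (fun ω => g ω i) ω := by
    funext ω
    simp only [Set.indicator_apply, Set.mem_setOf_eq]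
    rw [Finset.sum_ite_mem, Finset.univ_inter]
  rw [he]
  exact Finset.measurable_sum _ fun i _ => (hg i).indicator (rem_measSet I t i)

lemma injOn_I {N : ℕ} (I : ℕ → Ω → Fin N)
    (hWoR : ∀ t ω, 1 ≤ t → t ≤ N → I t ω ∈ remaining I t ω)
    (ω : Ω) {t : ℕ} (ht : t ≤ N) :
    ∀ j1 ∈ Finset.Icc 1 t, ∀ j2 ∈ Finset.Icc 1 t, I j1 ω = I j2 ω → j1 = j2 := by
  have key : ∀ j1 j2, j1 ∈ Finset.Icc 1 t → j2 ∈ Finset.Icc 1 t → j1 < j2 →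
      I j1 ω ≠ I j2 ω := by
    intro j1 j2 h1 h2 hlt heq
    have h2' := Finset.mem_Icc.1 h2
    have := hWoR j2 ω h2'.1 (le_trans h2'.2 ht)
    rw [remaining, Finset.mem_sdiff] at this
    exact this.2 (Finset.mem_image.2 ⟨j1,
      Finset.mem_Icc.2 ⟨(Finset.mem_Icc.1 h1).1, Nat.le_pred_of_lt hlt⟩, heq⟩)
  intro j1 h1 j2 h2 heq
  rcases lt_trichotomy j1 j2 with h | h | h
  · exact absurd heq (key _ _ h1 h2 h)
  · exact h
  · exact absurd heq.symm (key _ _ h2 h1 h)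

lemma sum_rem_pif {N : ℕ} (π f : Fin N → ℝ) (I : ℕ → Ω → Fin N)
    (hWoR : ∀ t ω, 1 ≤ t → t ≤ N → I t ω ∈ remaining I t ω)
    {mstar : ℝ} (hmstar : mstar = ∑ i, π i * f i)
    (ω : Ω) {t : ℕ} (htN : t ≤ N) :
    ∑ i ∈ remaining I t ω, π i * f i
      = mstar - ∑ j ∈ Finset.Icc 1 (t - 1), π (I j ω) * f (I j ω) := by
  have hinj : ∀ j1 ∈ Finset.Icc 1 (t-1), ∀ j2 ∈ Finset.Icc 1 (t-1),
      I j1 ω = I j2 ω → j1 = j2 :=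
    injOn_I I hWoR ω (le_trans (Nat.sub_le t 1) htN)
  have himg : ∑ j ∈ Finset.Icc 1 (t - 1), π (I j ω) * f (I j ω)
      = ∑ i ∈ (Finset.Icc 1 (t - 1)).image (fun j => I j ω), π i * f i := by
    rw [Finset.sum_image hinj]
  have hsplit : ∑ i ∈ remaining I t ω, π i * f i
      + ∑ i ∈ (Finset.Icc 1 (t - 1)).image (fun j => I j ω), π i * f i
      = ∑ i : Fin N, π i * f i := by
    rw [remaining]
    exact Finset.sum_sdiff (Finset.subset_univ _)
  rw [himg, hmstar]
  linarith

end Helpers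

/-- For any side information `S : {1,…,N} → [0,1]` and any predictable
sequence `(β_t)` with `β_t ∈ [−1,1]`, the control variate
`U_t = S(I_t) − Σ_{i∈N_t} q_t(i) S(i)` satisfies `E[U_t | F_{t−1}] = 0` almost surely for every
`t`; consequently the control-variate wealth process
`W̃_t(m*) = Π_{s=1}^t (1 + λ_s(m*)(Z_s + β_s U_s − μ_s(m*)))`, with predictable `(λ_t(m*))`
ensuring each factor is nonnegative, is a nonnegative martingale with initial value `1`. -/
theorem statement9
    [m0 : MeasurableSpace Ω] (μ : Measure Ω) [IsProbabilityMeasure μ]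
    {N : ℕ} (hN : 1 ≤ N)
    (π f : Fin N → ℝ)
    (hπ : ∀ i, π i ∈ Set.Ioc (0 : ℝ) 1) (hπsum : ∑ i, π i = 1)
    (hf : ∀ i, f i ∈ Set.Icc (0 : ℝ) 1)
    (I : ℕ → Ω → Fin N) (hI : ∀ t, Measurable (I t))
    (q : ℕ → Ω → Fin N → ℝ)
    (hq_meas : ∀ t, 1 ≤ t → t ≤ N → ∀ i,
      StronglyMeasurable[filt I (t - 1)] fun ω => q t ω i)
    (hq_pos : ∀ t ω, 1 ≤ t → t ≤ N → ∀ i ∈ remaining I t ω, 0 < q t ω i)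
    (hq_sum : ∀ t ω, 1 ≤ t → t ≤ N → ∑ i ∈ remaining I t ω, q t ω i = 1)
    (hWoR : ∀ t ω, 1 ≤ t → t ≤ N → I t ω ∈ remaining I t ω)
    (hcond : ∀ t, 1 ≤ t → t ≤ N → ∀ G : Ω → Fin N → ℝ,
      (∀ i, StronglyMeasurable[filt I (t - 1)] fun ω => G ω i) →
      μ[(fun ω => G ω (I t ω)) | filt I (t - 1)]
        =ᵐ[μ] fun ω => ∑ i ∈ remaining I t ω, q t ω i * G ω i)
    (mstar : ℝ) (hmstar : mstar = ∑ i, π i * f i)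
    -- side information and predictable control-variate weights
    (S : Fin N → ℝ) (hS : ∀ i, S i ∈ Set.Icc (0 : ℝ) 1)
    (β : ℕ → Ω → ℝ)
    (hβ_meas : ∀ t, 1 ≤ t → t ≤ N → StronglyMeasurable[filt I (t - 1)] (β t))
    (hβ_bdd : ∀ t ω, β t ω ∈ Set.Icc (-1 : ℝ) 1)
    -- predictable betting strategy keeping the factors nonnegative
    (lam : ℕ → Ω → ℝ)
    (hlam_meas : ∀ t, 1 ≤ t → t ≤ N → StronglyMeasurable[filt I (t - 1)] (lam t))
    (hfac : ∀ t, 1 ≤ t → t ≤ N → ∀ᵐ ω ∂μ,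
      0 ≤ 1 + lam t ω * (Zt π f q I t ω + β t ω * Ut S q I t ω - muT π f I mstar t ω)) :
    (∀ t, 1 ≤ t → t ≤ N → μ[Ut S q I t | filt I (t - 1)] =ᵐ[μ] fun _ => 0) ∧
    (∀ ω, wealthCV π f S q I lam β mstar 0 ω = 1) ∧
    (∀ t, t ≤ N → StronglyMeasurable[filt I t] (wealthCV π f S q I lam β mstar t)) ∧
    (∀ t, t ≤ N → ∀ᵐ ω ∂μ, 0 ≤ wealthCV π f S q I lam β mstar t ω) ∧
    (∀ t, 1 ≤ t → t ≤ N →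
      μ[wealthCV π f S q I lam β mstar t | filt I (t - 1)]
        =ᵐ[μ] wealthCV π f S q I lam β mstar (t - 1)) := by
  classical
  -- measurability of each factor
  have hfacm : ∀ s, 1 ≤ s → s ≤ N → Measurable[filt I s] fun ω =>
      1 + lam s ω * (Zt π f q I s ω + β s ω * Ut S q I s ω - muT π f I mstar s ω) := by
    intro s h1 hsN
    have hle : filt I (s-1) ≤ filt I s := filt_mono I (Nat.sub_le s 1)
    have hIs : Measurable[filt I s] (I s) := meas_I I (Finset.mem_Icc.2 ⟨h1, le_rfl⟩)
    have hq' : ∀ i, Measurable[filt I s] fun ω => q s ω i :=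
      fun i => ((hq_meas s h1 hsN i).measurable).mono hle le_rfl
    have hZ : Measurable[filt I s] (Zt π f q I s) :=
      ((Measurable.of_discrete (f := f)).comp hIs).mul
        (((Measurable.of_discrete (f := π)).comp hIs).div (comp_meas hIs hq'))
    have hU : Measurable[filt I s] (Ut S q I s) := by
      refine ((Measurable.of_discrete (f := S)).comp hIs).sub ?_
      exact (sum_rem_meas I s fun i =>
        ((hq_meas s h1 hsN i).measurable).mul_const (S i)).mono hle le_rfl
    have hmu : Measurable[filt I s] (muT π f I mstar s) := by
      refine Measurable.const_sub (Finset.measurable_sum _ fun j hj => ?_) mstar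
      exact (Measurable.of_discrete (f := fun i => π i * f i)).comp
        (meas_I I (Finset.Icc_subset_Icc_right (Nat.sub_le s 1) hj))
    exact measurable_const.add
      ((((hlam_meas s h1 hsN).measurable).mono hle le_rfl).mul
        ((hZ.add ((((hβ_meas s h1 hsN).measurable).mono hle le_rfl).mul hU)).sub hmu))
  -- measurability of the wealth process
  have hWmeas : ∀ t, t ≤ N → Measurable[filt I t] (wealthCV π f S q I lam β mstar t) := by
    intro t htN
    apply Finset.measurable_prod
    intro s hs
    have hs' := Finset.mem_Icc.1 hs
    exact (hfacm s hs'.1 (le_trans hs'.2 htN)).mono (filt_mono I hs'.2) le_rfl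
  refine ⟨?_, ?_, ?_, ?_, ?_⟩
  · -- E[U_t | F_{t-1}] = 0
    intro t ht1 htN
    have hG : ∀ i, StronglyMeasurable[filt I (t-1)]
        fun ω => S i - ∑ j ∈ remaining I t ω, q t ω j * S j := by
      intro i
      exact (Measurable.const_sub (sum_rem_meas I t fun j =>
        ((hq_meas t ht1 htN j).measurable).mul_const (S j)) (S i)).stronglyMeasurable
    have h := hcond t ht1 htN
      (fun ω i => S i - ∑ j ∈ remaining I t ω, q t ω j * S j) hG
    refine h.trans (Filter.Eventually.of_forall fun ω => ?_)
    have hc := hq_sum t ω ht1 htN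
    dsimp only
    rw [Finset.sum_congr rfl fun i _ => mul_sub (q t ω i) (S i) _,
      Finset.sum_sub_distrib, ← Finset.sum_mul, hc, one_mul, sub_self]
  · -- initial value 1
    intro ω
    show ∏ s ∈ Finset.Icc 1 0, _ = 1
    rw [Finset.Icc_eq_empty (by omega), Finset.prod_empty]
  · -- strong measurability
    exact fun t htN => (hWmeas t htN).stronglyMeasurable
  · -- nonnegativity
    intro t htN
    have h := (MeasureTheory.ae_ball_iff (Finset.Icc 1 t : Finset ℕ).countable_toSet).2
      fun s hs => hfac s (Finset.mem_Icc.1 hs).1 (le_trans (Finset.mem_Icc.1 hs).2 htN)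
    filter_upwards [h] with ω hω
    exact Finset.prod_nonneg fun s hs => hω s hs
  · -- martingale property
    intro t ht1 htN
    have hle : filt I (t-1) ≤ filt I (t-1) := le_rfl
    have hWp : Measurable[filt I (t-1)] (wealthCV π f S q I lam β mstar (t-1)) :=
      hWmeas (t-1) (le_trans (Nat.sub_le t 1) htN)
    have hcsum : Measurable[filt I (t-1)] fun ω => ∑ j ∈ remaining I t ω, q t ω j * S j :=
      sum_rem_meas I t fun j => ((hq_meas t ht1 htN j).measurable).mul_const (S j)
    have hmu : Measurable[filt I (t-1)] (muT π f I mstar t) := by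
      refine Measurable.const_sub (Finset.measurable_sum _ fun j hj => ?_) mstar
      exact (Measurable.of_discrete (f := fun i => π i * f i)).comp (meas_I I hj)
    have hG : ∀ i, StronglyMeasurable[filt I (t-1)] fun ω =>
        wealthCV π f S q I lam β mstar (t-1) ω *
          (1 + lam t ω * (f i * (π i / q t ω i)
            + β t ω * (S i - ∑ j ∈ remaining I t ω, q t ω j * S j)
            - muT π f I mstar t ω)) := by
      intro i
      refine (hWp.mul (measurable_const.add (((hlam_meas t ht1 htN).measurable).mul
        ((Measurable.add ?_ (((hβ_meas t ht1 htN).measurable).mul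
          (Measurable.const_sub hcsum (S i)))).sub hmu)))).stronglyMeasurable
      exact (measurable_const.div ((hq_meas t ht1 htN i).measurable)).const_mul (f i)
    have h := hcond t ht1 htN (fun ω i =>
        wealthCV π f S q I lam β mstar (t-1) ω *
          (1 + lam t ω * (f i * (π i / q t ω i)
            + β t ω * (S i - ∑ j ∈ remaining I t ω, q t ω j * S j)
            - muT π f I mstar t ω))) hG
    have ht' : t - 1 + 1 = t := Nat.succ_pred_eq_of_pos ht1
    have hWt : (fun ω =>
        wealthCV π f S q I lam β mstar (t-1) ω *
          (1 + lam t ω * (f (I t ω) * (π (I t ω) / q t ω (I t ω))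
            + β t ω * (S (I t ω) - ∑ j ∈ remaining I t ω, q t ω j * S j)
            - muT π f I mstar t ω)))
        = wealthCV π f S q I lam β mstar t := by
      funext ω
      show _ = ∏ s ∈ Finset.Icc 1 t, _
      conv_rhs => rw [← ht']
      rw [Finset.prod_Icc_succ_top (by omega)]
      rw [ht']
      rfl
    rw [← hWt]
    refine h.trans (Filter.Eventually.of_forall fun ω => ?_)
    dsimp only
    have step : ∀ i ∈ remaining I t ω,
        q t ω i * (wealthCV π f S q I lam β mstar (t-1) ω *
          (1 + lam t ω * (f i * (π i / q t ω i)
            + β t ω * (S i - ∑ j ∈ remaining I t ω, q t ω j * S j)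
            - muT π f I mstar t ω)))
        = wealthCV π f S q I lam β mstar (t-1) ω * q t ω i
          + (wealthCV π f S q I lam β mstar (t-1) ω * lam t ω) * (π i * f i)
          + (wealthCV π f S q I lam β mstar (t-1) ω * lam t ω * β t ω) * (q t ω i * S i)
          - (wealthCV π f S q I lam β mstar (t-1) ω * lam t ω * β t ω *
              (∑ j ∈ remaining I t ω, q t ω j * S j)) * q t ω i
          - (wealthCV π f S q I lam β mstar (t-1) ω * lam t ω * muT π f I mstar t ω)
              * q t ω i := by
      intro i hi
      have hqi : q t ω i ≠ 0 := ne_of_gt (hq_pos t ω ht1 htN i hi)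
      field_simp
      ring
    rw [Finset.sum_congr rfl step]
    simp only [Finset.sum_sub_distrib, Finset.sum_add_distrib, ← Finset.mul_sum]
    rw [hq_sum t ω ht1 htN, sum_rem_pif π f I hWoR hmstar ω htN]
    simp only [muT]
    ring


end RLFA
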